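/- Every proper principal submatrix of a bi-diagonal south-west (bdsw) matrix is nonsingular. -/

import Mathlib

open Matrix Finset
/-- A *bi-diagonal south-west* (bdsw) matrix: the diagonal, the super diagonal and the
south-west corner entry are nonzero, and all other entries are zero. -/
def Bdsw {n : ℕ} (B : Matrix (Fin (n + 2)) (Fin (n + 2)) ℝ) : Prop :=
  (∀ i, B i i ≠ 0) ∧
  (∀ i j : Fin (n + 2), (j : ℕ) = (i : ℕ) + 1 → B i j ≠ 0) ∧
  (B (Fin.last (n + 1)) 0 ≠ 0) ∧
  (∀ i j : Fin (n + 2), i ≠ j → (j : ℕ) ≠ (i : ℕ) + 1 →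
    ¬(i = Fin.last (n + 1) ∧ j = 0) → B i j = 0)

theorem stmt2 {n : ℕ} (A : Matrix (Fin (n + 2)) (Fin (n + 2)) ℝ) (hA : Bdsw A)
    (α : Finset (Fin (n + 2))) (hne : α.Nonempty) (hproper : α ≠ Finset.univ) :
    (A.submatrix (fun i : {x // x ∈ α} => (i : Fin (n + 2)))
      (fun j : {x // x ∈ α} => (j : Fin (n + 2)))).det ≠ 0 := by
  obtain ⟨k, hk⟩ := by simpa using Finset.exists_of_ssubset (Finset.ssubset_univ_iff.mpr hproper)
  -- rotation sending k to the last position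
  set e : Fin (n + 2) ≃ Fin (n + 2) := Equiv.subRight (k + 1) with he
  have he_apply : ∀ x, e x = x - (k + 1) := fun x => rfl
  -- e x = last ↔ x = k
  have hek : ∀ x : Fin (n+2), x ≠ k → e x ≠ Fin.last (n+1) := by
    intro x hx h
    apply hx
    have : x - (k + 1) = -1 := by
      rw [he_apply] at h
      rw [h]
      ext
      simp [Fin.last]
    have : x = k := by
      have := congrArg (· + (k + 1)) this
      simpa [sub_add_cancel] using this
    exact this
  -- key: for x ≠ k, e x < e (x + 1)
  have hstep : ∀ x : Fin (n+2), x ≠ k → e x < e (x + 1) := by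
    intro x hx
    have h1 : e (x + 1) = e x + 1 := by
      rw [he_apply, he_apply]; abel
    have h2 : e x ≠ Fin.last (n+1) := hek x hx
    have h3 : (e x : ℕ) < n + 1 := by
      have := Fin.val_lt_last h2
      simpa [Fin.last] using this
    rw [h1, Fin.lt_def, Fin.val_add_one]
    simp [h2]
  -- zero pattern: if i,j ∈ α and e j < e i then A i j = 0
  have hz : ∀ i j : Fin (n+2), i ∈ α → j ∈ α → e j < e i → A i j = 0 := by
    intro i j hi hj hlt
    have hik : i ≠ k := fun h => hk (h ▸ hi)
    apply hA.2.2.2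
    · rintro rfl; exact lt_irrefl _ hlt
    · intro hji
      have hjeq : j = i + 1 := by
        ext
        rw [Fin.val_add_one]
        have : i ≠ Fin.last (n+1) := by
          intro h
          subst h
          simp [Fin.val_last] at hji
          have := j.isLt
          omega
        simp [this, hji]
      have := hstep i hik
      rw [← hjeq] at this
      exact absurd hlt (not_lt.mpr this.le)
    · rintro ⟨rfl, rfl⟩
      have h01 : (0 : Fin (n+2)) = Fin.last (n+1) + 1 := by
        rw [Fin.last_add_one]
      have := hstep (Fin.last (n+1)) hik
      rw [← h01] at this
      exact absurd hlt (not_lt.mpr this.le)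
  -- transfer to rotated index set
  set β : Finset (Fin (n+2)) := α.image e with hβ
  have hmemβ : ∀ y : Fin (n+2), y ∈ β → e.symm y ∈ α := by
    intro y hy
    rw [hβ, Finset.mem_image] at hy
    obtain ⟨a, ha, rfl⟩ := hy
    simpa using ha
  let ε : {x // x ∈ α} ≃ {y // y ∈ β} :=
    { toFun := fun x => ⟨e x, Finset.mem_image_of_mem e x.2⟩
      invFun := fun y => ⟨e.symm y, hmemβ y y.2⟩
      left_inv := fun x => by simp
      right_inv := fun y => by simp }
  set M := A.submatrix (fun i : {x // x ∈ α} => (i : Fin (n + 2)))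
      (fun j : {x // x ∈ α} => (j : Fin (n + 2))) with hM
  have hdet : M.det = (M.submatrix ε.symm ε.symm).det :=
    (Matrix.det_submatrix_equiv_self ε.symm M).symm
  rw [hdet]
  have htri : (M.submatrix ε.symm ε.symm).BlockTriangular id := by
    intro i j hij
    simp only [Matrix.submatrix_apply, hM]
    apply hz
    · exact (ε.symm i).2
    · exact (ε.symm j).2
    · show e (ε.symm j).1 < e (ε.symm i).1
      have h1 : e (ε.symm i).1 = i := by simp [ε]
      have h2 : e (ε.symm j).1 = j := by simp [ε]
      rw [h1, h2]
      exact hij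
  rw [Matrix.det_of_upperTriangular htri]
  apply Finset.prod_ne_zero_iff.mpr
  intro i _
  exact hA.1 _
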